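/- Strengthened chain rule for max-relative entropy: let A = A₁⊗A₂, ρ a density operator and σ positive semidefinite on A, E ∈ TPCP(A,B), F ∈ CP(A,B), and suppose there exists R ∈ CP(A₂,B) with F = R ∘ tr_{A₁}. Then D_max(E(ρ)‖F(σ)) ≤ D_max(ρ_{A₂}‖σ_{A₂}) + D_max(E(ρ)‖F(ρ)), where ρ_{A₂} = tr_{A₁}(ρ). -/

import Mathlib

open Matrix BigOperators
open scoped ComplexOrder Classical
noncomputable section
namespace QIT
variable {n m : Type*}

def Dmax [Fintype n] (ρ σ : Matrix n n ℂ) : EReal :=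
  sInf ((fun l : ℝ => (l : EReal)) '' {l : ℝ | ((2:ℝ) ^ l • σ - ρ).PosSemidef})

def matLog [Fintype n] [DecidableEq n] (A : Matrix n n ℂ) : Matrix n n ℂ :=
  if h : A.IsHermitian then
    (h.eigenvectorUnitary : Matrix n n ℂ) *
      Matrix.diagonal (fun i => (Real.log (h.eigenvalues i) : ℂ)) *
      (star (h.eigenvectorUnitary : Matrix n n ℂ))
  else 0

def mpow [Fintype n] [DecidableEq n] (A : Matrix n n ℂ) (p : ℝ) : Matrix n n ℂ :=
  if h : A.IsHermitian then
    (h.eigenvectorUnitary : Matrix n n ℂ) *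
      Matrix.diagonal (fun i => ((h.eigenvalues i ^ p : ℝ) : ℂ)) *
      (star (h.eigenvectorUnitary : Matrix n n ℂ))
  else 0

def msqrt [Fintype n] [DecidableEq n] (A : Matrix n n ℂ) : Matrix n n ℂ :=
  if h : A.PosSemidef then
    (h.1.eigenvectorUnitary : Matrix n n ℂ) *
      Matrix.diagonal ((↑) ∘ (Real.sqrt ·) ∘ h.1.eigenvalues) *
      (star (h.1.eigenvectorUnitary : Matrix n n ℂ))
  else 0

def SuppLE [Fintype n] (ρ σ : Matrix n n ℂ) : Prop :=
  ∀ v, σ.mulVec v = 0 → ρ.mulVec v = 0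

def relEntR [Fintype n] [DecidableEq n] (ρ σ : Matrix n n ℂ) : ℝ :=
  ((ρ * (matLog ρ - matLog σ)).trace).re

def relEnt [Fintype n] [DecidableEq n] (ρ σ : Matrix n n ℂ) : EReal :=
  if SuppLE ρ σ then ((relEntR ρ σ : ℝ) : EReal) else ⊤

def IsDensity [Fintype n] (ρ : Matrix n n ℂ) : Prop := ρ.PosSemidef ∧ ρ.trace = 1

def matTensorMap {k : Type*} (Φ : Matrix n n ℂ → Matrix m m ℂ)
    (M : Matrix (k × n) (k × n) ℂ) : Matrix (k × m) (k × m) ℂ :=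
  fun p q => Φ (fun a b => M (p.1, a) (q.1, b)) p.2 q.2

def matTensorMapLeft {k : Type*} (Φ : Matrix n n ℂ → Matrix m m ℂ)
    (M : Matrix (n × k) (n × k) ℂ) : Matrix (m × k) (m × k) ℂ :=
  fun p q => Φ (fun a b => M (a, p.2) (b, q.2)) p.1 q.1

def IsCP [Fintype n] [Fintype m] (Φ : Matrix n n ℂ →ₗ[ℂ] Matrix m m ℂ) : Prop :=
  ∀ (k : ℕ) (M : Matrix (Fin k × n) (Fin k × n) ℂ), M.PosSemidef →
    (matTensorMap (⇑Φ) M).PosSemidef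

def IsTP [Fintype n] [Fintype m] (Φ : Matrix n n ℂ →ₗ[ℂ] Matrix m m ℂ) : Prop :=
  ∀ M, (Φ M).trace = M.trace

def DmaxChan [Fintype n] [Fintype m] (E F : Matrix n n ℂ →ₗ[ℂ] Matrix m m ℂ) : EReal :=
  ⨆ φ : {φ : Matrix (n × n) (n × n) ℂ // IsDensity φ},
    Dmax (matTensorMap (⇑E) φ.1) (matTensorMap (⇑F) φ.1)

def DChan [Fintype n] [DecidableEq n] [Fintype m] [DecidableEq m]
    (E F : Matrix n n ℂ →ₗ[ℂ] Matrix m m ℂ) : EReal :=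
  ⨆ φ : {φ : Matrix (n × n) (n × n) ℂ // IsDensity φ},
    relEnt (matTensorMap (⇑E) φ.1) (matTensorMap (⇑F) φ.1)

def DAmort [Fintype n] [DecidableEq n] [Fintype m] [DecidableEq m]
    (E F : Matrix n n ℂ →ₗ[ℂ] Matrix m m ℂ) : EReal :=
  ⨆ r : ℕ, ⨆ φ : {φ : Matrix (Fin r × n) (Fin r × n) ℂ // IsDensity φ},
    ⨆ ω : {ω : Matrix (Fin r × n) (Fin r × n) ℂ // IsDensity ω},
      relEnt (matTensorMap (⇑E) φ.1) (matTensorMap (⇑F) ω.1) - relEnt φ.1 ω.1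

def traceNorm [Fintype n] [DecidableEq n] (A : Matrix n n ℂ) : ℝ :=
  ((msqrt (Aᴴ * A)).trace).re

def genFid [Fintype n] [DecidableEq n] (ρ σ : Matrix n n ℂ) : ℝ :=
  (traceNorm (msqrt ρ * msqrt σ) +
    Real.sqrt ((1 - ρ.trace.re) * (1 - σ.trace.re))) ^ 2

def pdist [Fintype n] [DecidableEq n] (ρ σ : Matrix n n ℂ) : ℝ :=
  Real.sqrt (1 - genFid ρ σ)

def tensorPow [Fintype n] (ρ : Matrix n n ℂ) (k : ℕ) :
    Matrix (Fin k → n) (Fin k → n) ℂ :=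
  fun v w => ∏ i, ρ (v i) (w i)

def chanPow [Fintype n] [DecidableEq n] [Fintype m]
    (E : Matrix n n ℂ →ₗ[ℂ] Matrix m m ℂ) (k : ℕ)
    (M : Matrix (Fin k → n) (Fin k → n) ℂ) : Matrix (Fin k → m) (Fin k → m) ℂ :=
  fun v w => ∑ x : Fin k → n, ∑ y : Fin k → n,
    (∏ i, E (Matrix.single (x i) (y i) 1) (v i) (w i)) * M x y


/-- The partial trace over the first factor `A₁`. -/
def ptrace₁ {n₁ n₂ : Type*} [Fintype n₁]
    (M : Matrix (n₁ × n₂) (n₁ × n₂) ℂ) : Matrix n₂ n₂ ℂ :=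
  fun a b => ∑ i, M (i, a) (i, b)


lemma real_smul_mat {n : Type*} (r : ℝ) (A : Matrix n n ℂ) : r • A = (r : ℂ) • A := by
  ext i j; simp [Matrix.smul_apply, Complex.real_smul]

lemma smul_psd' {n : Type*} [Fintype n] {c : ℝ} (hc : 0 ≤ c) {A : Matrix n n ℂ}
    (hA : A.PosSemidef) : (c • A).PosSemidef := by
  rw [real_smul_mat]
  constructor
  · unfold Matrix.IsHermitian
    rw [Matrix.conjTranspose_smul, hA.1, Complex.star_def, Complex.conj_ofReal]
  · intro x
    exact (hA.smul (show (0:ℂ) ≤ (c:ℂ) by exact_mod_cast hc)).2 x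

lemma psd_trace_re_nonneg {n : Type*} [Fintype n] {A : Matrix n n ℂ}
    (hA : A.PosSemidef) : 0 ≤ A.trace.re := by
  have h : ∀ i, 0 ≤ (A i i).re := by
    intro i
    have h2 : 0 ≤ A i i := hA.diag_nonneg
    exact (Complex.le_def.mp h2).1
  rw [Matrix.trace]
  simp only [Complex.re_sum]
  exact Finset.sum_nonneg fun i _ => h i

lemma Dmax_lower_bound {n : Type*} [Fintype n] {ρ σ : Matrix n n ℂ}
    (ht : 0 < ρ.trace.re) {l : ℝ} (hl : ((2:ℝ) ^ l • σ - ρ).PosSemidef) :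
    Real.logb 2 (ρ.trace.re / σ.trace.re) ≤ l := by
  have h0 := psd_trace_re_nonneg hl
  have htr : (((2:ℝ) ^ l • σ - ρ).trace).re = (2:ℝ) ^ l * σ.trace.re - ρ.trace.re := by
    rw [Matrix.trace_sub, real_smul_mat, Matrix.trace_smul]
    simp [Complex.smul_re]
  rw [htr] at h0
  have hp : (0:ℝ) < (2:ℝ) ^ l := Real.rpow_pos_of_pos two_pos l
  have hs : 0 < σ.trace.re := by nlinarith
  have hd : ρ.trace.re / σ.trace.re ≤ (2:ℝ) ^ l := by
    rw [div_le_iff₀ hs]; linarith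
  calc Real.logb 2 (ρ.trace.re / σ.trace.re) ≤ Real.logb 2 ((2:ℝ) ^ l) :=
        Real.logb_le_logb_of_le one_lt_two (div_pos ht hs) hd
    _ = l := Real.logb_rpow two_pos (by norm_num)

lemma Dmax_ne_bot' {n : Type*} [Fintype n] {ρ σ : Matrix n n ℂ}
    (ht : 0 < ρ.trace.re) : Dmax ρ σ ≠ ⊥ := by
  have hle : ((Real.logb 2 (ρ.trace.re / σ.trace.re) : ℝ) : EReal) ≤ Dmax ρ σ := by
    apply le_sInf
    rintro x ⟨l, hl, rfl⟩
    exact EReal.coe_le_coe_iff.2 (Dmax_lower_bound ht hl)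
  intro h
  rw [h] at hle
  exact (EReal.bot_lt_coe _).not_ge hle

lemma isCP_posSemidef {n m : Type*} [Fintype n] [Fintype m]
    {Φ : Matrix n n ℂ →ₗ[ℂ] Matrix m m ℂ} (hΦ : IsCP Φ)
    {M : Matrix n n ℂ} (hM : M.PosSemidef) : (Φ M).PosSemidef := by
  have h := hΦ 1 (M.submatrix Prod.snd Prod.snd) (hM.submatrix _)
  have h2 := h.submatrix (fun a : m => ((0 : Fin 1), a))
  have he : Φ M = (matTensorMap (⇑Φ) (M.submatrix Prod.snd Prod.snd)).submatrix
      (fun a : m => ((0 : Fin 1), a)) (fun a : m => ((0 : Fin 1), a)) := rfl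
  rwa [he]

lemma trace_ptrace₁ {n₁ n₂ : Type*} [Fintype n₁] [Fintype n₂]
    (M : Matrix (n₁ × n₂) (n₁ × n₂) ℂ) : (ptrace₁ M).trace = M.trace := by
  rw [Matrix.trace, Matrix.trace]
  simp only [Matrix.diag, ptrace₁]
  rw [Fintype.sum_prod_type]
  exact Finset.sum_comm

/-- **Strengthened chain rule for the max-relative entropy.**
Let `A = A₁ ⊗ A₂`, `ρ` a density operator and `σ` positive semidefinite on `A`,
`E ∈ TPCP(A,B)`, `F ∈ CP(A,B)`, and suppose there is `R ∈ CP(A₂,B)` with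
`F = R ∘ tr_{A₁}`. Then
`D_max(E(ρ)‖F(σ)) ≤ D_max(ρ_{A₂}‖σ_{A₂}) + D_max(E(ρ)‖F(ρ))`. -/
theorem Dmax_chain_rule_strengthened {n₁ n₂ m : Type*}
    [Fintype n₁] [Fintype n₂] [Fintype m]
    (ρ σ : Matrix (n₁ × n₂) (n₁ × n₂) ℂ) (hρ : IsDensity ρ) (hσ : σ.PosSemidef)
    (E F : Matrix (n₁ × n₂) (n₁ × n₂) ℂ →ₗ[ℂ] Matrix m m ℂ)
    (hE : IsCP E) (hETP : IsTP E) (hF : IsCP F)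
    (R : Matrix n₂ n₂ ℂ →ₗ[ℂ] Matrix m m ℂ) (hR : IsCP R)
    (hfact : ∀ M : Matrix (n₁ × n₂) (n₁ × n₂) ℂ, F M = R (ptrace₁ M)) :
    Dmax (E ρ) (F σ) ≤ Dmax (ptrace₁ ρ) (ptrace₁ σ) + Dmax (E ρ) (F ρ) := by
  have hρt : ρ.trace.re = 1 := by rw [hρ.2]; rfl
  have h1 : Dmax (ptrace₁ ρ) (ptrace₁ σ) ≠ ⊥ := by
    apply Dmax_ne_bot'
    rw [trace_ptrace₁, hρt]; norm_num
  have h2 : Dmax (E ρ) (F ρ) ≠ ⊥ := by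
    apply Dmax_ne_bot'
    rw [hETP ρ, hρt]; norm_num
  refine EReal.le_add_of_forall_gt (Or.inl h1) (Or.inr h2) ?_
  intro a' ha' b' hb'
  obtain ⟨x, ⟨l₁, hl₁, rfl⟩, hx⟩ := sInf_lt_iff.mp ha'
  obtain ⟨y, ⟨l₂, hl₂, rfl⟩, hy⟩ := sInf_lt_iff.mp hb'
  have hp2 : (0:ℝ) ≤ (2:ℝ) ^ l₂ := (Real.rpow_pos_of_pos two_pos l₂).le
  have hR1 : (((2:ℝ) ^ l₁) • F σ - F ρ).PosSemidef := by
    have hpos := isCP_posSemidef hR hl₁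
    have heq : R (((2:ℝ) ^ l₁) • ptrace₁ σ - ptrace₁ ρ)
        = ((2:ℝ) ^ l₁) • F σ - F ρ := by
      rw [map_sub, real_smul_mat, LinearMap.map_smul, ← real_smul_mat, hfact σ, hfact ρ]
    rwa [heq] at hpos
  have hsum := (smul_psd' hp2 hR1).add hl₂
  have hkey : ((2:ℝ) ^ l₂) • (((2:ℝ) ^ l₁) • F σ - F ρ) + (((2:ℝ) ^ l₂) • F ρ - E ρ)
      = ((2:ℝ) ^ (l₁ + l₂)) • F σ - E ρ := by
    rw [smul_sub, smul_smul, ← Real.rpow_add two_pos, add_comm l₂ l₁, sub_add_sub_cancel]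
  rw [hkey] at hsum
  have hle : Dmax (E ρ) (F σ) ≤ ((l₁ + l₂ : ℝ) : EReal) :=
    sInf_le ⟨l₁ + l₂, hsum, rfl⟩
  refine hle.trans ?_
  rw [EReal.coe_add]
  exact add_le_add hx.le hy.le


end QIT
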